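/- Let G be a group and let A₀ ⊆ A₁ ⊆ ⋯ ⊆ A_n be subgroups of G with A₀ the trivial subgroup, A_n = G, and A_i normal in A_{i+1} for every i < n. If each factor group A_{i+1}/A_i is IP-regular, then G is IP-regular. -/

import Mathlib

/-- A subset `A` of a semigroup `S` is *strongly IP-regular* if for every sequence `x` in `S`
with `FP x ⊆ A` there is no sequence `y` in `S` with `FP y ⊆ x₀ · FP₁ x`. -/
def StronglyIPRegular {S : Type*} [Semigroup S] (A : Set S) : Prop :=
  ∀ x : Stream' S, Hindman.FP x ⊆ A →
    ∀ y : Stream' S, ¬ Hindman.FP y ⊆ (x.head * ·) '' Hindman.FP x.tail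

/-- A semigroup `S` is *IP-regular* if `S \ E(S)`, the complement of the set of idempotent
elements, is the union of finitely many strongly IP-regular subsets. -/
def IPRegular (S : Type*) [Semigroup S] : Prop :=
  ∃ (n : ℕ) (f : Fin n → Set S), (∀ i, StronglyIPRegular (f i)) ∧
    {s : S | s * s = s}ᶜ = ⋃ i, f i

section Aux

variable {M N : Type*} [Semigroup M] [Semigroup N]

lemma aux_FP_map {φ : M → N} (hφ : ∀ a b, φ (a * b) = φ a * φ b) {x : Stream' M} {a : M}
    (h : a ∈ Hindman.FP x) : φ a ∈ Hindman.FP (x.map φ) := by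
  induction h with
  | head' a => exact (Stream'.head_map φ a) ▸ Hindman.FP.head _
  | tail' a m _ ih =>
      exact Hindman.FP.tail _ _ ih
  | cons' a m _ ih =>
      rw [hφ]
      exact (Stream'.head_map φ a) ▸ Hindman.FP.cons _ _ ih

lemma aux_FP_map_rev {φ : M → N} (hφ : ∀ a b, φ (a * b) = φ a * φ b) {x : Stream' M} {b : N}
    (h : b ∈ Hindman.FP (x.map φ)) : ∃ a ∈ Hindman.FP x, b = φ a := by
  suffices H : ∀ w : Stream' N, ∀ b ∈ Hindman.FP w, ∀ x : Stream' M, w = x.map φ →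
      ∃ a ∈ Hindman.FP x, b = φ a from H _ b h x rfl
  intro w b hb
  induction hb with
  | head' a => intro x hx; subst hx; exact ⟨x.head, Hindman.FP.head x, (Stream'.head_map φ x).symm⟩
  | tail' a m _ ih =>
      intro x hx; subst hx
      obtain ⟨c, hc, rfl⟩ := ih x.tail (Stream'.tail_map φ x)
      exact ⟨c, Hindman.FP.tail _ _ hc, rfl⟩
  | cons' a m _ ih =>
      intro x hx; subst hx
      obtain ⟨c, hc, rfl⟩ := ih x.tail (Stream'.tail_map φ x)
      exact ⟨x.head * c, Hindman.FP.cons _ _ hc, by rw [hφ, Stream'.head_map]⟩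

/-- Preimages of strongly IP-regular sets under semigroup homomorphisms are strongly
IP-regular. -/
lemma stronglyIPRegular_preimage {φ : M → N} (hφ : ∀ a b, φ (a * b) = φ a * φ b) {C : Set N}
    (hC : StronglyIPRegular C) : StronglyIPRegular (φ ⁻¹' C) := by
  intro x hx y hy
  refine hC (x.map φ) ?_ (y.map φ) ?_
  · intro b hb
    obtain ⟨a, ha, rfl⟩ := aux_FP_map_rev hφ hb
    exact hx ha
  · intro b hb
    obtain ⟨a, ha, rfl⟩ := aux_FP_map_rev hφ hb
    obtain ⟨c, hc, rfl⟩ := hy ha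
    refine ⟨φ c, ?_, by simp [hφ, Stream'.head_map]⟩
    rw [Stream'.tail_map] at *
    exact aux_FP_map hφ hc

/-- Images of strongly IP-regular sets under injective semigroup homomorphisms are strongly
IP-regular. -/
lemma stronglyIPRegular_image {φ : M → N} (hφ : ∀ a b, φ (a * b) = φ a * φ b)
    (hinj : Function.Injective φ) {B : Set M} (hB : StronglyIPRegular B) :
    StronglyIPRegular (φ '' B) := by
  intro x hx y hy
  have hxr : ∀ n, ∃ a : M, φ a = x.get n := by
    intro n
    obtain ⟨a, _, ha⟩ := hx (Hindman.FP.singleton x n)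
    exact ⟨a, ha⟩
  choose x' hx' using hxr
  change Stream' M at x'
  have hxe : x = Stream'.map φ x' := by
    apply Stream'.ext; intro n; rw [Stream'.get_map]; exact (hx' n).symm
  have hyr : ∀ n, ∃ a : M, φ a = y.get n := by
    intro n
    obtain ⟨c, hc, hceq⟩ := hy (Hindman.FP.singleton y n)
    rw [hxe, Stream'.tail_map] at hc
    obtain ⟨d, _, rfl⟩ := aux_FP_map_rev hφ hc
    refine ⟨x' 0 * d, ?_⟩
    rw [hφ, ← hceq, hxe, Stream'.head_map]
    rfl
  choose y' hy' using hyr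
  change Stream' M at y'
  have hye : y = Stream'.map φ y' := by
    apply Stream'.ext; intro n; rw [Stream'.get_map]; exact (hy' n).symm
  refine hB x' ?_ y' ?_
  · intro a ha
    have := aux_FP_map hφ ha
    rw [← hxe] at this
    obtain ⟨b, hb, hba⟩ := hx this
    rwa [← hinj hba]
  · intro a ha
    have := aux_FP_map hφ ha
    rw [← hye] at this
    obtain ⟨c, hc, hceq⟩ := hy this
    rw [hxe, Stream'.tail_map] at hc
    obtain ⟨d, hd, rfl⟩ := aux_FP_map_rev hφ hc
    refine ⟨d, hd, hinj ?_⟩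
    rw [← hceq, hφ, hxe, Stream'.head_map]

lemma ipRegular_of_mulEquiv (e : M ≃* N) (h : IPRegular M) : IPRegular N := by
  obtain ⟨m, f, hf, hcov⟩ := h
  refine ⟨m, fun i => e.symm ⁻¹' f i, fun i =>
    stronglyIPRegular_preimage (fun a b => map_mul e.symm a b) (hf i), ?_⟩
  ext s
  have : s * s = s ↔ e.symm s * e.symm s = e.symm s := by
    rw [← map_mul e.symm]
    exact ⟨fun h => by rw [h], fun h => e.symm.injective h⟩
  simp only [Set.mem_compl_iff, Set.mem_setOf_eq, Set.mem_iUnion, Set.mem_preimage, this]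
  have := Set.ext_iff.mp hcov (e.symm s)
  simpa using this

lemma ipRegular_of_subsingleton [Subsingleton M] : IPRegular M := by
  refine ⟨0, Fin.elim0, fun i => i.elim0, ?_⟩
  ext s
  simp [Subsingleton.elim (s * s) s]

end Aux

/-- Extension lemma: if `N ⊴ H` with `N` and `H/N` IP-regular, then `H` is IP-regular. -/
lemma ipRegular_extension {H : Type*} [Group H] (N : Subgroup H) [N.Normal]
    (hN : IPRegular N) (hQ : IPRegular (H ⧸ N)) : IPRegular H := by
  obtain ⟨m, f, hf, hfcov⟩ := hN
  obtain ⟨k, g, hg, hgcov⟩ := hQ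
  refine ⟨m + k, Fin.addCases (fun i => ((↑) : N → H) '' f i)
    (fun j => (QuotientGroup.mk : H → H ⧸ N) ⁻¹' g j), ?_, ?_⟩
  · intro i
    refine Fin.addCases ?_ ?_ i
    · intro i
      simp only [Fin.addCases_left]
      exact stronglyIPRegular_image (fun a b => rfl) Subtype.coe_injective (hf i)
    · intro j
      simp only [Fin.addCases_right]
      exact stronglyIPRegular_preimage (fun a b => rfl) (hg j)
  · ext s
    simp only [Set.mem_compl_iff, Set.mem_setOf_eq, Set.mem_iUnion, mul_eq_right]
    constructor
    · intro hs
      by_cases hq : (QuotientGroup.mk s : H ⧸ N) = 1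
      · have hsN : s ∈ N := (QuotientGroup.eq_one_iff s).mp hq
        have : (⟨s, hsN⟩ : N) ∈ {t : N | t * t = t}ᶜ := by
          simp only [Set.mem_compl_iff, Set.mem_setOf_eq, mul_eq_right]
          exact fun h => hs (by simpa [Subtype.ext_iff] using h)
        rw [hfcov] at this
        obtain ⟨i, hi⟩ := Set.mem_iUnion.mp this
        exact ⟨Fin.castAdd k i, by simp only [Fin.addCases_left]; exact ⟨_, hi, rfl⟩⟩
      · have : (QuotientGroup.mk s : H ⧸ N) ∈ {t : H ⧸ N | t * t = t}ᶜ := by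
          simpa [mul_eq_right] using hq
        rw [hgcov] at this
        obtain ⟨j, hj⟩ := Set.mem_iUnion.mp this
        exact ⟨Fin.natAdd m j, by simp only [Fin.addCases_right]; exact hj⟩
    · rintro ⟨i, hi⟩ rfl
      refine Fin.addCases ?_ ?_ i hi
      · intro i hi
        simp only [Fin.addCases_left] at hi
        obtain ⟨a, ha, ha1⟩ := hi
        have : a ∈ {t : N | t * t = t}ᶜ := hfcov ▸ Set.mem_iUnion.mpr ⟨i, ha⟩
        simp only [Set.mem_compl_iff, Set.mem_setOf_eq, mul_eq_right] at this
        exact this (by ext; exact ha1)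
      · intro j hj
        simp only [Fin.addCases_right, Set.mem_preimage] at hj
        have : (QuotientGroup.mk (1 : H) : H ⧸ N) ∈ {t : H ⧸ N | t * t = t}ᶜ :=
          hgcov ▸ Set.mem_iUnion.mpr ⟨j, hj⟩
        simp [mul_eq_right] at this

/-- If a group `G` has a chain of subgroups `⊥ = A 0 ≤ A 1 ≤ ⋯ ≤ A n = ⊤` with each `A i`
normal in `A (i+1)` and each factor group `A (i+1) / A i` IP-regular, then `G` is
IP-regular. -/
theorem ipRegular_of_subnormal_series {G : Type*} [Group G] (n : ℕ)
    (A : Fin (n + 1) → Subgroup G)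
    (hmono : ∀ i : Fin n, A i.castSucc ≤ A i.succ)
    (hbot : A 0 = ⊥) (htop : A (Fin.last n) = ⊤)
    (hnorm : ∀ i : Fin n, ((A i.castSucc).subgroupOf (A i.succ)).Normal)
    (hfac : ∀ i : Fin n,
      letI := hnorm i
      IPRegular (↥(A i.succ) ⧸ (A i.castSucc).subgroupOf (A i.succ))) :
    IPRegular G := by
  have key : ∀ i : Fin (n + 1), IPRegular ↥(A i) := by
    intro i
    induction i using Fin.induction with
    | zero =>
        haveI : Subsingleton ↥(A 0) := by
          rw [hbot]
          infer_instance
        exact ipRegular_of_subsingleton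
    | succ i ih =>
        letI := hnorm i
        refine ipRegular_extension ((A i.castSucc).subgroupOf (A i.succ)) ?_ (hfac i)
        exact ipRegular_of_mulEquiv (Subgroup.subgroupOfEquivOfLe (hmono i)).symm ih
  exact ipRegular_of_mulEquiv
    ((MulEquiv.subgroupCongr htop).trans Subgroup.topEquiv) (key (Fin.last n))
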